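/- Let V be a finite-dimensional real vector space and ρ an expansive endomorphism action of a semigroup Γ on V. Then there exists a finitely generated subsemigroup Γ₀ ⊆ Γ whose restricted action on V is expansive; equivalently, if every nonzero v ∈ V has unbounded Γ-orbit, then there is a finitely generated subsemigroup Γ₀ such that every nonzero v ∈ V has unbounded Γ₀-orbit. -/

import Mathlib

/-- If `ρ` is an expansive endomorphism action of a semigroup (with
identity) `Γ` on a finite-dimensional real vector space `V`, then there is a finitely
generated subsemigroup `Γ₀ ⊆ Γ` whose restricted action is still expansive. -/
theorem exists_finitely_generated_subsemigroup_expansive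
    {V Γ : Type*} [NormedAddCommGroup V] [NormedSpace ℝ V]
    [FiniteDimensional ℝ V] [Monoid Γ] (ρ : Γ →* (V →L[ℝ] V))
    (hexp : ∃ U ∈ nhds (0 : V), ∀ v : V, (∀ γ : Γ, ρ γ v ∈ U) → v = 0) :
    ∃ S : Finset Γ, ∃ U ∈ nhds (0 : V), ∀ v : V,
      (∀ γ ∈ Submonoid.closure (S : Set Γ), ρ γ v ∈ U) → v = 0 := by
  obtain ⟨U, hU, h⟩ := hexp
  obtain ⟨ε, hε, hball⟩ := Metric.mem_nhds_iff.mp hU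
  -- Every nonzero vector is blown beyond norm 2 by some group element.
  have key : ∀ v : V, v ≠ 0 → ∃ γ : Γ, 2 < ‖ρ γ v‖ := by
    intro v hv
    by_contra hc
    push_neg at hc
    have hv' : (ε / 3) • v = 0 := by
      apply h
      intro γ
      apply hball
      rw [Metric.mem_ball, dist_zero_right, map_smul, norm_smul,
        Real.norm_eq_abs, abs_of_pos (by linarith : (0:ℝ) < ε / 3)]
      nlinarith [hc γ, norm_nonneg (ρ γ v)]
    rcases smul_eq_zero.mp hv' with h1 | h2
    · linarith
    · exact hv h2
  choose γf hγf using key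
  classical
  set g : V → Γ := fun v => if hv : v ≠ 0 then γf v hv else 1 with hg
  have hgspec : ∀ v : V, v ≠ 0 → 2 < ‖ρ (g v) v‖ := by
    intro v hv
    simp only [hg, dif_pos hv]
    exact hγf v hv
  -- compactness of the unit sphere
  have hcomp : IsCompact (Metric.sphere (0 : V) 1) := isCompact_sphere 0 1
  have hopen : ∀ v : V, IsOpen {w : V | 2 < ‖ρ (g v) w‖} := by
    intro v
    have : Continuous fun w : V => ‖ρ (g v) w‖ :=
      (ρ (g v)).continuous.norm
    exact isOpen_lt continuous_const this
  have hcov : Metric.sphere (0 : V) 1 ⊆ ⋃ v : V, {w : V | 2 < ‖ρ (g v) w‖} := by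
    intro x hx
    have hx0 : x ≠ 0 := by
      intro hx0
      rw [hx0] at hx
      simp at hx
    exact Set.mem_iUnion.mpr ⟨x, hgspec x hx0⟩
  obtain ⟨t, ht⟩ := hcomp.elim_finite_subcover _ hopen hcov
  refine ⟨t.image g, Metric.ball 0 1, Metric.ball_mem_nhds 0 one_pos, ?_⟩
  -- blow-up step on the sphere, hence on all nonzero vectors
  have step : ∀ v : V, v ≠ 0 → ∃ γ ∈ (t.image g : Finset Γ), 2 * ‖v‖ < ‖ρ γ v‖ := by
    intro v hv
    have hnv : ‖v‖ ≠ 0 := norm_ne_zero_iff.mpr hv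
    have hmem : ‖v‖⁻¹ • v ∈ Metric.sphere (0 : V) 1 := by
      simp [norm_smul, abs_of_nonneg (inv_nonneg.mpr (norm_nonneg v)),
        inv_mul_cancel₀ hnv]
    obtain ⟨i, hi, hw⟩ := Set.mem_iUnion₂.mp (ht hmem)
    refine ⟨g i, Finset.mem_image_of_mem g hi, ?_⟩
    have hw' : 2 < ‖ρ (g i) (‖v‖⁻¹ • v)‖ := hw
    rw [map_smul, norm_smul, Real.norm_eq_abs,
      abs_of_nonneg (inv_nonneg.mpr (norm_nonneg v))] at hw'
    have hpos : (0:ℝ) < ‖v‖ := lt_of_le_of_ne (norm_nonneg v) (Ne.symm hnv)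
    calc 2 * ‖v‖ < (‖v‖⁻¹ * ‖ρ (g i) v‖) * ‖v‖ := by
          exact (mul_lt_mul_iff_of_pos_right hpos).mpr hw'
      _ = ‖ρ (g i) v‖ := by field_simp
  -- iterate to get unbounded growth inside the closure
  have grow : ∀ n : ℕ, ∀ v : V, v ≠ 0 →
      ∃ γ ∈ Submonoid.closure ((t.image g : Finset Γ) : Set Γ),
        2 ^ n * ‖v‖ ≤ ‖ρ γ v‖ := by
    intro n
    induction n with
    | zero =>
      intro v hv
      exact ⟨1, Submonoid.one_mem _, by simp⟩
    | succ n ih =>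
      intro v hv
      obtain ⟨γ, hγ, hn⟩ := ih v hv
      have hpos : (0:ℝ) < 2 ^ n * ‖v‖ :=
        mul_pos (pow_pos two_pos n) (norm_pos_iff.mpr hv)
      have hne : ρ γ v ≠ 0 := by
        intro h0
        rw [h0, norm_zero] at hn
        linarith
      obtain ⟨δ, hδmem, hδ⟩ := step (ρ γ v) hne
      refine ⟨δ * γ, mul_mem (Submonoid.subset_closure hδmem) hγ, ?_⟩
      have : ρ (δ * γ) v = ρ δ (ρ γ v) := by
        rw [map_mul]; rfl
      rw [this, pow_succ]
      calc 2 ^ n * 2 * ‖v‖ = 2 * (2 ^ n * ‖v‖) := by ring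
        _ ≤ 2 * ‖ρ γ v‖ := by linarith
        _ ≤ ‖ρ δ (ρ γ v)‖ := le_of_lt hδ
  -- conclude
  intro v hv
  by_contra hv0
  have hpos : (0:ℝ) < ‖v‖ := norm_pos_iff.mpr hv0
  obtain ⟨n, hn⟩ := pow_unbounded_of_one_lt (‖v‖⁻¹) (by norm_num : (1:ℝ) < 2)
  obtain ⟨γ, hγ, hge⟩ := grow n v hv0
  have h1 : 1 < 2 ^ n * ‖v‖ := by
    rw [← inv_mul_cancel₀ hpos.ne']
    exact (mul_lt_mul_iff_of_pos_right hpos).mpr hn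
  have hlt : ‖ρ γ v‖ < 1 := by
    have := hv γ hγ
    rwa [Metric.mem_ball, dist_zero_right] at this
  linarith
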